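/- arXiv:1501.03298 — 3 statements merged into one kernel-verified Lean document; each statement's English description precedes it below -/
import Mathlib

section
/- For real antisymmetric 4×4 matrices identified with pairs (e⃗, m⃗) ∈ ℝ³ × ℝ³, the set Σ = {(e⃗, m⃗) : e⃗·m⃗ = ±1, ‖e⃗‖ = ‖m⃗‖} has exactly two connected components Σ₊ = {e⃗·m⃗ = 1, ‖e⃗‖=‖m⃗‖} and Σ₋ = {e⃗·m⃗ = −1, ‖e⃗‖=‖m⃗‖}, and each component is homeomorphic to the tangent bundle of the 2-sphere TS². -/
noncomputable section

open scoped InnerProductSpace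

abbrev E3 := EuclideanSpace ℝ (Fin 3)

/-- Σ = {(e⃗, m⃗) : e⃗·m⃗ = ±1, ‖e⃗‖ = ‖m⃗‖}. -/
def SigmaSet : Set (E3 × E3) :=
  {p | (⟪p.1, p.2⟫_ℝ = 1 ∨ ⟪p.1, p.2⟫_ℝ = -1) ∧ ‖p.1‖ = ‖p.2‖}

def SigmaPlus : Set (E3 × E3) := {p | ⟪p.1, p.2⟫_ℝ = 1 ∧ ‖p.1‖ = ‖p.2‖}

def SigmaMinus : Set (E3 × E3) := {p | ⟪p.1, p.2⟫_ℝ = -1 ∧ ‖p.1‖ = ‖p.2‖}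

/-- The tangent bundle of the unit 2-sphere, realized as pairs (x⃗, v⃗) with ‖x⃗‖ = 1 and
x⃗·v⃗ = 0. -/
def TS2 : Set (E3 × E3) := {p | ‖p.1‖ = 1 ∧ ⟪p.1, p.2⟫_ℝ = 0}

/-! ### Auxiliary material -/

namespace SigmaAux

/-- forward map `(e,m) ↦ ((e+m)/‖e+m‖, e-m)`. -/
def fwd (p : E3 × E3) : E3 × E3 := ((‖p.1 + p.2‖)⁻¹ • (p.1 + p.2), p.1 - p.2)

/-- backward map `(x,v) ↦ ((√(‖v‖²+4)·x+v)/2, (√(‖v‖²+4)·x-v)/2)`. -/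
def bwd (q : E3 × E3) : E3 × E3 :=
  ((1/2 : ℝ) • (Real.sqrt (‖q.2‖ ^ 2 + 4) • q.1 + q.2),
   (1/2 : ℝ) • (Real.sqrt (‖q.2‖ ^ 2 + 4) • q.1 - q.2))

lemma norm_add_sq_of_mem {p : E3 × E3} (hp : p ∈ SigmaPlus) :
    ‖p.1 + p.2‖ ^ 2 = 2 * ‖p.1‖ ^ 2 + 2 := by
  obtain ⟨h1, h2⟩ := hp
  rw [norm_add_sq_real, h1, ← h2]; ring

lemma norm_sub_sq_of_mem {p : E3 × E3} (hp : p ∈ SigmaPlus) :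
    ‖p.1 - p.2‖ ^ 2 = 2 * ‖p.1‖ ^ 2 - 2 := by
  obtain ⟨h1, h2⟩ := hp
  rw [norm_sub_sq_real, h1, ← h2]; ring

lemma norm_add_pos {p : E3 × E3} (hp : p ∈ SigmaPlus) : 0 < ‖p.1 + p.2‖ := by
  have h := norm_add_sq_of_mem hp
  nlinarith [norm_nonneg (p.1 + p.2), sq_nonneg ‖p.1‖]

lemma inner_add_sub {p : E3 × E3} (hp : p ∈ SigmaPlus) :
    ⟪p.1 + p.2, p.1 - p.2⟫_ℝ = 0 := by
  have h2 := hp.2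
  have : ⟪p.1 + p.2, p.1 - p.2⟫_ℝ = ‖p.1‖ ^ 2 - ‖p.2‖ ^ 2 := by
    rw [inner_sub_right, inner_add_left, inner_add_left,
      real_inner_self_eq_norm_sq, real_inner_self_eq_norm_sq, real_inner_comm p.2 p.1]
    ring
  rw [this, h2]; ring

lemma fwd_mem {p : E3 × E3} (hp : p ∈ SigmaPlus) : fwd p ∈ TS2 := by
  have hc := norm_add_pos hp
  constructor
  · show ‖(‖p.1 + p.2‖)⁻¹ • (p.1 + p.2)‖ = 1
    rw [norm_smul, norm_inv, norm_norm, inv_mul_cancel₀ hc.ne']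
  · show ⟪(‖p.1 + p.2‖)⁻¹ • (p.1 + p.2), p.1 - p.2⟫_ℝ = 0
    rw [real_inner_smul_left, inner_add_sub hp, mul_zero]

lemma sqrt_sq' {q : E3 × E3} : Real.sqrt (‖q.2‖ ^ 2 + 4) ^ 2 = ‖q.2‖ ^ 2 + 4 :=
  Real.sq_sqrt (by positivity)

lemma sqrt_pos' {q : E3 × E3} : 0 < Real.sqrt (‖q.2‖ ^ 2 + 4) :=
  Real.sqrt_pos.2 (by positivity)

lemma bwd_mem {q : E3 × E3} (hq : q ∈ TS2) : bwd q ∈ SigmaPlus := by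
  obtain ⟨hx, hxv⟩ := hq
  set r := Real.sqrt (‖q.2‖ ^ 2 + 4) with hr
  have hr2 : r ^ 2 = ‖q.2‖ ^ 2 + 4 := sqrt_sq'
  have hvx : ⟪q.2, q.1⟫_ℝ = 0 := by rw [real_inner_comm]; exact hxv
  have hn : ‖r • q.1‖ = r := by
    rw [norm_smul, hx, mul_one, Real.norm_eq_abs, abs_of_pos sqrt_pos']
  have hinner : ⟪r • q.1 + q.2, r • q.1 - q.2⟫_ℝ = 4 := by
    simp only [inner_sub_right, inner_add_left, real_inner_smul_left,
      real_inner_smul_right, real_inner_self_eq_norm_sq, hvx, hxv]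
    have hn2 : ‖r • q.1‖ ^ 2 = r ^ 2 := by rw [hn]
    linarith [hr2, hn2]
  constructor
  · show ⟪(1/2 : ℝ) • (r • q.1 + q.2), (1/2 : ℝ) • (r • q.1 - q.2)⟫_ℝ = 1
    rw [real_inner_smul_left, real_inner_smul_right, hinner]; norm_num
  · show ‖(1/2 : ℝ) • (r • q.1 + q.2)‖ = ‖(1/2 : ℝ) • (r • q.1 - q.2)‖
    have h1 : ‖r • q.1 + q.2‖ ^ 2 = ‖r • q.1 - q.2‖ ^ 2 := by
      rw [norm_add_sq_real, norm_sub_sq_real, real_inner_smul_left, hxv]; ring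
    have h2 : ‖r • q.1 + q.2‖ = ‖r • q.1 - q.2‖ := by
      calc ‖r • q.1 + q.2‖ = Real.sqrt (‖r • q.1 + q.2‖ ^ 2) := by
            rw [Real.sqrt_sq (norm_nonneg _)]
        _ = Real.sqrt (‖r • q.1 - q.2‖ ^ 2) := by rw [h1]
        _ = ‖r • q.1 - q.2‖ := Real.sqrt_sq (norm_nonneg _)
    rw [norm_smul, norm_smul, h2]

lemma bwd_fwd {p : E3 × E3} (hp : p ∈ SigmaPlus) : bwd (fwd p) = p := by
  have hc := norm_add_pos hp
  have hkey : Real.sqrt (‖(fwd p).2‖ ^ 2 + 4) = ‖p.1 + p.2‖ := by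
    have : ‖(fwd p).2‖ ^ 2 + 4 = ‖p.1 + p.2‖ ^ 2 := by
      show ‖p.1 - p.2‖ ^ 2 + 4 = _
      rw [norm_sub_sq_of_mem hp, norm_add_sq_of_mem hp]; ring
    rw [this, Real.sqrt_sq hc.le]
  have hsm : Real.sqrt (‖(fwd p).2‖ ^ 2 + 4) • (fwd p).1 = p.1 + p.2 := by
    rw [hkey]
    show ‖p.1 + p.2‖ • ((‖p.1 + p.2‖)⁻¹ • (p.1 + p.2)) = p.1 + p.2
    rw [smul_smul, mul_inv_cancel₀ hc.ne', one_smul]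
  show ((1/2 : ℝ) • (Real.sqrt (‖(fwd p).2‖ ^ 2 + 4) • (fwd p).1 + (fwd p).2),
        (1/2 : ℝ) • (Real.sqrt (‖(fwd p).2‖ ^ 2 + 4) • (fwd p).1 - (fwd p).2)) = p
  rw [hsm]
  have ha : (1/2 : ℝ) • (p.1 + p.2 + (p.1 - p.2)) = p.1 := by module
  have hb : (1/2 : ℝ) • (p.1 + p.2 - (p.1 - p.2)) = p.2 := by module
  show ((1/2 : ℝ) • (p.1 + p.2 + (p.1 - p.2)), (1/2 : ℝ) • (p.1 + p.2 - (p.1 - p.2)))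
      = p
  rw [ha, hb]

lemma fwd_bwd {q : E3 × E3} (hq : q ∈ TS2) : fwd (bwd q) = q := by
  set r := Real.sqrt (‖q.2‖ ^ 2 + 4) with hrdef
  have hr : 0 < r := sqrt_pos'
  have h1 : (bwd q).1 + (bwd q).2 = r • q.1 := by
    show (1/2 : ℝ) • (r • q.1 + q.2) + (1/2 : ℝ) • (r • q.1 - q.2) = r • q.1
    module
  have h2 : (bwd q).1 - (bwd q).2 = q.2 := by
    show (1/2 : ℝ) • (r • q.1 + q.2) - (1/2 : ℝ) • (r • q.1 - q.2) = q.2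
    module
  have hn : ‖r • q.1‖ = r := by
    rw [norm_smul, hq.1, Real.norm_eq_abs, abs_of_pos hr, mul_one]
  show ((‖(bwd q).1 + (bwd q).2‖)⁻¹ • ((bwd q).1 + (bwd q).2), (bwd q).1 - (bwd q).2) = q
  rw [h1, h2, hn, smul_smul, inv_mul_cancel₀ hr.ne', one_smul]

lemma continuous_bwd : Continuous bwd := by
  unfold bwd
  fun_prop

/-- The homeomorphism `Σ₊ ≃ₜ TS²`. -/
def homeoPlus : SigmaPlus ≃ₜ TS2 where
  toFun p := ⟨fwd p, fwd_mem p.2⟩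
  invFun q := ⟨bwd q, bwd_mem q.2⟩
  left_inv p := Subtype.ext (bwd_fwd p.2)
  right_inv q := Subtype.ext (fwd_bwd q.2)
  continuous_toFun := by
    apply Continuous.subtype_mk
    apply Continuous.prodMk
    · exact ((continuous_subtype_val.fst.add continuous_subtype_val.snd).norm.inv₀
        (fun p => (norm_add_pos p.2).ne')).smul
        (continuous_subtype_val.fst.add continuous_subtype_val.snd)
    · exact continuous_subtype_val.fst.sub continuous_subtype_val.snd
  continuous_invFun := by
    apply Continuous.subtype_mk
    exact continuous_bwd.comp continuous_subtype_val

/-- Negation of the second factor, as a homeomorphism of the ambient space. -/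
def negSnd : (E3 × E3) ≃ₜ (E3 × E3) :=
  (Homeomorph.refl E3).prodCongr (Homeomorph.neg E3)

lemma negSnd_image : negSnd '' SigmaMinus = SigmaPlus := by
  ext p
  constructor
  · rintro ⟨q, ⟨hq1, hq2⟩, rfl⟩
    refine ⟨?_, ?_⟩
    · show ⟪q.1, -q.2⟫_ℝ = 1
      rw [inner_neg_right, hq1]; ring
    · show ‖q.1‖ = ‖-q.2‖
      rw [norm_neg]; exact hq2
  · intro hp
    refine ⟨(p.1, -p.2), ⟨?_, ?_⟩, ?_⟩
    · show ⟪p.1, -p.2⟫_ℝ = -1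
      rw [inner_neg_right, hp.1]
    · show ‖p.1‖ = ‖-p.2‖
      rw [norm_neg]; exact hp.2
    · show (p.1, - -p.2) = p
      simp

lemma sphere_rank : 1 < Module.rank ℝ E3 := by
  rw [← Module.finrank_eq_rank, finrank_euclideanSpace_fin]
  exact_mod_cast (by norm_num : (1:ℕ) < 3)

lemma TS2_pathConnected : IsPathConnected TS2 := by
  classical
  set x₀ : E3 := EuclideanSpace.single 0 1 with hx₀
  have hx₀n : ‖x₀‖ = 1 := by simp [hx₀]
  have hb : ((x₀, (0:E3)) : E3 × E3) ∈ TS2 := ⟨hx₀n, inner_zero_right _⟩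
  -- every point is joined to its "zero section" point
  have h1 : ∀ p ∈ TS2, JoinedIn TS2 p (p.1, (0:E3)) := by
    intro p hp
    refine ⟨⟨⟨fun t => (p.1, (1 - (t:ℝ)) • p.2), ?_⟩, ?_, ?_⟩, ?_⟩
    · exact continuous_const.prodMk
        ((continuous_const.sub continuous_subtype_val).smul continuous_const)
    · simp
    · simp
    · intro t
      refine ⟨hp.1, ?_⟩
      show ⟪p.1, (1 - (t:ℝ)) • p.2⟫_ℝ = 0
      rw [real_inner_smul_right, hp.2, mul_zero]
  -- the zero section is path connected
  have hsp : IsPathConnected (Metric.sphere (0:E3) 1) :=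
    isPathConnected_sphere sphere_rank 0 zero_le_one
  have hj : Continuous (fun x : E3 => ((x, (0:E3)) : E3 × E3)) :=
    continuous_id.prodMk continuous_const
  have himg : IsPathConnected ((fun x : E3 => ((x, (0:E3)) : E3 × E3)) '' Metric.sphere 0 1) :=
    hsp.image hj
  have hsub : (fun x : E3 => ((x, (0:E3)) : E3 × E3)) '' Metric.sphere 0 1 ⊆ TS2 := by
    rintro _ ⟨x, hx, rfl⟩
    exact ⟨by simpa using hx, inner_zero_right _⟩
  refine ⟨(x₀, 0), hb, ?_⟩
  intro p hp
  have hzp : JoinedIn TS2 (x₀, (0:E3)) (p.1, (0:E3)) := by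
    have h₁ : ((x₀, (0:E3)) : E3 × E3) ∈ (fun x : E3 => ((x, (0:E3)) : E3 × E3)) '' Metric.sphere 0 1 :=
      ⟨x₀, by simpa using hx₀n, rfl⟩
    have h₂ : ((p.1, (0:E3)) : E3 × E3) ∈ (fun x : E3 => ((x, (0:E3)) : E3 × E3)) '' Metric.sphere 0 1 :=
      ⟨p.1, by simpa using hp.1, rfl⟩
    exact (himg.joinedIn _ h₁ _ h₂).mono hsub
  exact hzp.trans (h1 p hp).symm

lemma SigmaPlus_eq_image : SigmaPlus = bwd '' TS2 := by
  ext p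
  constructor
  · intro hp
    exact ⟨fwd p, fwd_mem hp, bwd_fwd hp⟩
  · rintro ⟨q, hq, rfl⟩
    exact bwd_mem hq

lemma isConnected_SigmaPlus : IsConnected SigmaPlus := by
  rw [SigmaPlus_eq_image]
  exact (TS2_pathConnected.image continuous_bwd).isConnected

lemma SigmaMinus_eq_image : SigmaMinus = negSnd.symm '' SigmaPlus := by
  rw [← negSnd_image, ← Set.image_comp]
  simp [Function.comp]

lemma isConnected_SigmaMinus : IsConnected SigmaMinus := by
  rw [SigmaMinus_eq_image]
  exact isConnected_SigmaPlus.image _ negSnd.symm.continuous.continuousOn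

end SigmaAux

open SigmaAux in
/-- Σ has exactly two connected components Σ₊ and Σ₋ (they are disjoint, connected, their
union is Σ, and each is clopen in Σ), and each component is homeomorphic to TS². -/
theorem stmt1 :
    SigmaSet = SigmaPlus ∪ SigmaMinus ∧
    Disjoint SigmaPlus SigmaMinus ∧
    IsConnected SigmaPlus ∧ IsConnected SigmaMinus ∧
    IsClopen (Subtype.val ⁻¹' SigmaPlus : Set SigmaSet) ∧
    IsClopen (Subtype.val ⁻¹' SigmaMinus : Set SigmaSet) ∧
    Nonempty (SigmaPlus ≃ₜ TS2) ∧ Nonempty (SigmaMinus ≃ₜ TS2) := by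
  have hcont : Continuous (fun p : SigmaSet => ⟪(p : E3 × E3).1, (p : E3 × E3).2⟫_ℝ) := by
    apply Continuous.inner
    · exact continuous_subtype_val.fst
    · exact continuous_subtype_val.snd
  have hPeq : (Subtype.val ⁻¹' SigmaPlus : Set SigmaSet)
      = (fun p : SigmaSet => ⟪(p : E3 × E3).1, (p : E3 × E3).2⟫_ℝ) ⁻¹' {1} := by
    ext p
    simp only [Set.mem_preimage, Set.mem_singleton_iff]
    exact ⟨fun h => h.1, fun h => ⟨h, p.2.2⟩⟩
  have hMeq : (Subtype.val ⁻¹' SigmaMinus : Set SigmaSet)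
      = (fun p : SigmaSet => ⟪(p : E3 × E3).1, (p : E3 × E3).2⟫_ℝ) ⁻¹' {-1} := by
    ext p
    simp only [Set.mem_preimage, Set.mem_singleton_iff]
    exact ⟨fun h => h.1, fun h => ⟨h, p.2.2⟩⟩
  have hPclosed : IsClosed (Subtype.val ⁻¹' SigmaPlus : Set SigmaSet) := by
    rw [hPeq]; exact isClosed_singleton.preimage hcont
  have hMclosed : IsClosed (Subtype.val ⁻¹' SigmaMinus : Set SigmaSet) := by
    rw [hMeq]; exact isClosed_singleton.preimage hcont
  have hcompl : (Subtype.val ⁻¹' SigmaPlus : Set SigmaSet)ᶜ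
      = (Subtype.val ⁻¹' SigmaMinus : Set SigmaSet) := by
    ext p
    simp only [Set.mem_compl_iff, Set.mem_preimage]
    constructor
    · intro h
      rcases p.2.1 with h1 | h1
      · exact absurd ⟨h1, p.2.2⟩ h
      · exact ⟨h1, p.2.2⟩
    · rintro ⟨h1, _⟩ ⟨h2, _⟩
      rw [h1] at h2; norm_num at h2
  refine ⟨?_, ?_, isConnected_SigmaPlus, isConnected_SigmaMinus, ?_, ?_, ⟨homeoPlus⟩, ?_⟩
  · ext p
    simp only [SigmaSet, SigmaPlus, SigmaMinus, Set.mem_setOf_eq, Set.mem_union]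
    tauto
  · rw [Set.disjoint_left]
    rintro p ⟨h1, _⟩ ⟨h2, _⟩
    rw [h1] at h2; norm_num at h2
  · refine ⟨hPclosed, ?_⟩
    have := hMclosed.isOpen_compl
    rwa [← hcompl, compl_compl] at this
  · refine ⟨hMclosed, ?_⟩
    rw [← hcompl]
    exact hPclosed.isOpen_compl
  · exact ⟨((Homeomorph.setCongr SigmaMinus_eq_image).trans
      (negSnd.symm.image SigmaPlus).symm).trans homeoPlus⟩
end
end

section
/- Let q⁰, q¹, q², q³ be self-adjoint operators satisfying [q^μ, q^ν] = i σ^{μν} with σ having magnetic part m⃗ with ‖m⃗‖ ≥ 1. Then for any unit state vector ψ in the common domain, ∑_{1≤j<k≤3} Δ(q^j)Δ(q^k) ≥ 1/2. -/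
noncomputable section

open scoped InnerProductSpace
open Finset Matrix

/-- Uncertainty Δ(A) of the observable A in the vector state ψ. -/
def uncertainty {H : Type*} [NormedAddCommGroup H] [InnerProductSpace ℂ H]
    (A : H →ₗ[ℂ] H) (ψ : H) : ℝ :=
  Real.sqrt ((⟪ψ, A (A ψ)⟫_ℂ).re - ((⟪ψ, A ψ⟫_ℂ).re) ^ 2)

lemma robertson {H : Type*} [NormedAddCommGroup H] [InnerProductSpace ℂ H]
    (A B : H →ₗ[ℂ] H)
    (hA : ∀ x y : H, ⟪A x, y⟫_ℂ = ⟪x, A y⟫_ℂ)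
    (hB : ∀ x y : H, ⟪B x, y⟫_ℂ = ⟪x, B y⟫_ℂ)
    (c : ℝ) (ψ : H) (hψ : ‖ψ‖ = 1)
    (hc : A (B ψ) - B (A ψ) = (c : ℂ) • Complex.I • ψ) :
    |c| / 2 ≤ uncertainty A ψ * uncertainty B ψ := by
  have hψ1 : ⟪ψ, ψ⟫_ℂ = 1 := by
    rw [inner_self_eq_norm_sq_to_K, hψ]; norm_num
  set a : ℝ := (⟪ψ, A ψ⟫_ℂ).re with ha
  set b : ℝ := (⟪ψ, B ψ⟫_ℂ).re with hb
  have haA : ⟪ψ, A ψ⟫_ℂ = (a : ℂ) := by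
    have h1 : (starRingEnd ℂ) ⟪ψ, A ψ⟫_ℂ = ⟪ψ, A ψ⟫_ℂ :=
      (inner_conj_symm (A ψ) ψ).trans (hA ψ ψ)
    have := Complex.conj_eq_iff_re.mp h1
    rw [← this]
  have hbB : ⟪ψ, B ψ⟫_ℂ = (b : ℂ) := by
    have h1 : (starRingEnd ℂ) ⟪ψ, B ψ⟫_ℂ = ⟪ψ, B ψ⟫_ℂ :=
      (inner_conj_symm (B ψ) ψ).trans (hB ψ ψ)
    have := Complex.conj_eq_iff_re.mp h1
    rw [← this]
  have haA' : ⟪A ψ, ψ⟫_ℂ = (a : ℂ) := by rw [hA]; exact haA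
  have hbB' : ⟪B ψ, ψ⟫_ℂ = (b : ℂ) := by rw [hB]; exact hbB
  set u : H := A ψ - (a : ℂ) • ψ with hu
  set v : H := B ψ - (b : ℂ) • ψ with hv
  have huv : ⟪u, v⟫_ℂ = ⟪A ψ, B ψ⟫_ℂ - (a : ℂ) * b := by
    simp only [hu, hv, inner_sub_left, inner_sub_right, inner_smul_left, inner_smul_right,
      haA, hbB, haA', hbB', hψ1, Complex.conj_ofReal]
    ring
  have hvu : ⟪v, u⟫_ℂ = ⟪B ψ, A ψ⟫_ℂ - (a : ℂ) * b := by
    simp only [hu, hv, inner_sub_left, inner_sub_right, inner_smul_left, inner_smul_right,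
      haA, hbB, haA', hbB', hψ1, Complex.conj_ofReal]
    ring
  have h3 : ⟪ψ, A (B ψ)⟫_ℂ - ⟪ψ, B (A ψ)⟫_ℂ = (c : ℂ) * Complex.I := by
    rw [← inner_sub_right, hc, inner_smul_right, inner_smul_right, hψ1]
    ring
  have hcomm : ⟪u, v⟫_ℂ - ⟪v, u⟫_ℂ = (c : ℂ) * Complex.I := by
    rw [huv, hvu, hA ψ (B ψ), hB ψ (A ψ)]
    linear_combination h3
  have him : (⟪u, v⟫_ℂ).im = c / 2 := by
    have hvu' : ⟪v, u⟫_ℂ = (starRingEnd ℂ) ⟪u, v⟫_ℂ := (inner_conj_symm v u).symm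
    have h5 := congrArg Complex.im hvu'
    simp only [Complex.conj_im] at h5
    have := congrArg Complex.im hcomm
    rw [Complex.sub_im, h5] at this
    simp at this
    linarith
  have hbound : |c| / 2 ≤ ‖u‖ * ‖v‖ := by
    have h1 : |c| / 2 = |(⟪u, v⟫_ℂ).im| := by rw [him, abs_div]; norm_num
    have h2 : |(⟪u, v⟫_ℂ).im| ≤ ‖⟪u, v⟫_ℂ‖ := Complex.abs_im_le_norm _
    have h3 : ‖⟪u, v⟫_ℂ‖ ≤ ‖u‖ * ‖v‖ := norm_inner_le_norm u v
    linarith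
  have hUA : uncertainty A ψ = ‖u‖ := by
    have hnu : (⟪ψ, A (A ψ)⟫_ℂ).re - a ^ 2 = ‖u‖ ^ 2 := by
      have h1 : ‖u‖ ^ 2 = Complex.re ⟪u, u⟫_ℂ := by simpa using InnerProductSpace.norm_sq_eq_re_inner (𝕜 := ℂ) u
      have h2 : ⟪u, u⟫_ℂ = ⟪A ψ, A ψ⟫_ℂ - (a : ℂ) * a := by
        simp only [hu, inner_sub_left, inner_sub_right, inner_smul_left, inner_smul_right,
          haA, haA', hψ1, Complex.conj_ofReal]
        ring
      have h4 : ⟪A ψ, A ψ⟫_ℂ = ⟪ψ, A (A ψ)⟫_ℂ := hA ψ (A ψ)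
      rw [h1, h2, h4]
      simp [pow_two]
    rw [uncertainty, hnu, Real.sqrt_sq (norm_nonneg u)]
  have hUB : uncertainty B ψ = ‖v‖ := by
    have hnu : (⟪ψ, B (B ψ)⟫_ℂ).re - b ^ 2 = ‖v‖ ^ 2 := by
      have h1 : ‖v‖ ^ 2 = Complex.re ⟪v, v⟫_ℂ := by simpa using InnerProductSpace.norm_sq_eq_re_inner (𝕜 := ℂ) v
      have h2 : ⟪v, v⟫_ℂ = ⟪B ψ, B ψ⟫_ℂ - (b : ℂ) * b := by
        simp only [hv, inner_sub_left, inner_sub_right, inner_smul_left, inner_smul_right,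
          hbB, hbB', hψ1, Complex.conj_ofReal]
        ring
      have h4 : ⟪B ψ, B ψ⟫_ℂ = ⟪ψ, B (B ψ)⟫_ℂ := hB ψ (B ψ)
      rw [h1, h2, h4]
      simp [pow_two]
    rw [uncertainty, hnu, Real.sqrt_sq (norm_nonneg v)]
  rw [hUA, hUB]
  exact hbound

/-- If the self-adjoint coordinates satisfy [q^μ, q^ν] = iσ^{μν} with magnetic part m⃗ of
norm ≥ 1, then ∑_{1≤j<k≤3} Δ(q^j)Δ(q^k) ≥ 1/2 in every unit vector state. -/
theorem stmt3 {H : Type*} [NormedAddCommGroup H] [InnerProductSpace ℂ H]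
    (σ : Matrix (Fin 4) (Fin 4) ℝ) (hanti : σᵀ = -σ)
    (q : Fin 4 → H →ₗ[ℂ] H)
    (hsym : ∀ (μ : Fin 4) (x y : H), ⟪q μ x, y⟫_ℂ = ⟪x, q μ y⟫_ℂ)
    (hccr : ∀ (μ ν : Fin 4) (x : H), q μ (q ν x) - q ν (q μ x) = (σ μ ν : ℂ) • Complex.I • x)
    (hm : 1 ≤ Real.sqrt (σ 2 3 ^ 2 + σ 3 1 ^ 2 + σ 1 2 ^ 2))
    (ψ : H) (hψ : ‖ψ‖ = 1) :
    1 / 2 ≤ uncertainty (q 1) ψ * uncertainty (q 2) ψ +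
      uncertainty (q 1) ψ * uncertainty (q 3) ψ +
      uncertainty (q 2) ψ * uncertainty (q 3) ψ := by
  have h23 := robertson (q 2) (q 3) (hsym 2) (hsym 3) (σ 2 3) ψ hψ (hccr 2 3 ψ)
  have h31 := robertson (q 3) (q 1) (hsym 3) (hsym 1) (σ 3 1) ψ hψ (hccr 3 1 ψ)
  have h12 := robertson (q 1) (q 2) (hsym 1) (hsym 2) (σ 1 2) ψ hψ (hccr 1 2 ψ)
  have hsqrt : Real.sqrt (σ 2 3 ^ 2 + σ 3 1 ^ 2 + σ 1 2 ^ 2) ≤ |σ 2 3| + |σ 3 1| + |σ 1 2| := by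
    have h1 : σ 2 3 ^ 2 + σ 3 1 ^ 2 + σ 1 2 ^ 2 ≤ (|σ 2 3| + |σ 3 1| + |σ 1 2|) ^ 2 := by
      nlinarith [abs_nonneg (σ 2 3), abs_nonneg (σ 3 1), abs_nonneg (σ 1 2),
        sq_abs (σ 2 3), sq_abs (σ 3 1), sq_abs (σ 1 2)]
    calc Real.sqrt (σ 2 3 ^ 2 + σ 3 1 ^ 2 + σ 1 2 ^ 2)
        ≤ Real.sqrt ((|σ 2 3| + |σ 3 1| + |σ 1 2|) ^ 2) := Real.sqrt_le_sqrt h1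
      _ = |σ 2 3| + |σ 3 1| + |σ 1 2| := Real.sqrt_sq (by positivity)
  have hkey : 1 ≤ |σ 2 3| + |σ 3 1| + |σ 1 2| := le_trans hm hsqrt
  have hc13 : uncertainty (q 3) ψ * uncertainty (q 1) ψ
      = uncertainty (q 1) ψ * uncertainty (q 3) ψ := mul_comm _ _
  have hc23 : uncertainty (q 2) ψ * uncertainty (q 3) ψ
      = uncertainty (q 2) ψ * uncertainty (q 3) ψ := rfl
  rw [hc13] at h31
  linarith
end
end

section
/- Let q⁰,…,q³ be self-adjoint operators with [q^μ, q^ν] = iσ^{μν} where σ ∈ Σ has electric and magnetic parts (e⃗, m⃗). Then for any unit state ψ in the domain with vanishing expectations ⟨q^μ⟩ = 0, one has ∑_{μ=0}^{3} Δ(q^μ)² ≥ √(2 + ‖e⃗‖² + ‖m⃗‖²), and in particular ∑_μ Δ(q^μ)² ≥ 2, since ‖e⃗‖, ‖m⃗‖ ≥ 1 on Σ. -/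
noncomputable section

open scoped InnerProductSpace
open Finset Matrix

/-- Electric part: e_j = σ^{0j}. -/
def elecPart (σ : Matrix (Fin 4) (Fin 4) ℝ) : Fin 3 → ℝ := fun j => σ 0 j.succ

/-- Magnetic part: m = (σ^{23}, σ^{31}, σ^{12}). -/
def magnPart (σ : Matrix (Fin 4) (Fin 4) ℝ) : Fin 3 → ℝ := ![σ 2 3, σ 3 1, σ 1 2]

set_option maxHeartbeats 1000000 in
lemma keyA (a b c d f g : ℝ) :
    (!![0,a,b,c;-a,0,d,f;-b,-d,0,g;-c,-f,-g,0] : Matrix (Fin 4) (Fin 4) ℝ) *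
    !![0,a,b,c;-a,0,d,f;-b,-d,0,g;-c,-f,-g,0] =
    !![-(a^2+b^2+c^2), -(b*d+c*f), a*d-c*g, a*f+b*g;
       -(b*d+c*f), -(a^2+d^2+f^2), -(a*b+f*g), d*g-a*c;
       a*d-c*g, -(a*b+f*g), -(b^2+d^2+g^2), -(b*c+d*f);
       a*f+b*g, d*g-a*c, -(b*c+d*f), -(c^2+f^2+g^2)] := by
  ext i j
  fin_cases i <;> fin_cases j <;>
    simp [Matrix.mul_apply, Fin.sum_univ_four] <;> ring

set_option maxHeartbeats 1000000 in
lemma keyB (a b c d f g : ℝ) :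
    (!![-(a^2+b^2+c^2), -(b*d+c*f), a*d-c*g, a*f+b*g;
       -(b*d+c*f), -(a^2+d^2+f^2), -(a*b+f*g), d*g-a*c;
       a*d-c*g, -(a*b+f*g), -(b^2+d^2+g^2), -(b*c+d*f);
       a*f+b*g, d*g-a*c, -(b*c+d*f), -(c^2+f^2+g^2)] : Matrix (Fin 4) (Fin 4) ℝ) *
    !![-(a^2+b^2+c^2), -(b*d+c*f), a*d-c*g, a*f+b*g;
       -(b*d+c*f), -(a^2+d^2+f^2), -(a*b+f*g), d*g-a*c;
       a*d-c*g, -(a*b+f*g), -(b^2+d^2+g^2), -(b*c+d*f);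
       a*f+b*g, d*g-a*c, -(b*c+d*f), -(c^2+f^2+g^2)]
    + (a^2+b^2+c^2+d^2+f^2+g^2) •
    !![-(a^2+b^2+c^2), -(b*d+c*f), a*d-c*g, a*f+b*g;
       -(b*d+c*f), -(a^2+d^2+f^2), -(a*b+f*g), d*g-a*c;
       a*d-c*g, -(a*b+f*g), -(b^2+d^2+g^2), -(b*c+d*f);
       a*f+b*g, d*g-a*c, -(b*c+d*f), -(c^2+f^2+g^2)]
    + ((a*g-b*f+c*d)^2) • (1 : Matrix (Fin 4) (Fin 4) ℝ) = 0 := by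
  ext i j
  fin_cases i <;> fin_cases j <;>
    simp [Matrix.mul_apply, Fin.sum_univ_four, Matrix.one_apply] <;> ring



private lemma charC (σ : Matrix (Fin 4) (Fin 4) ℝ) (s : ℝ)
    (hR : σ*σ*(σ*σ) + s • (σ*σ) + 1 = 0) :
    (σ.map Complex.ofReal)*(σ.map Complex.ofReal)*((σ.map Complex.ofReal)*(σ.map Complex.ofReal))
      + (s:ℂ) • ((σ.map Complex.ofReal)*(σ.map Complex.ofReal)) + 1 = 0 := by
  ext i j
  have hij := congrFun (congrFun hR i) j
  simp only [Matrix.add_apply, Matrix.mul_apply, Matrix.smul_apply, Matrix.one_apply,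
    Matrix.zero_apply, Matrix.map_apply, Fin.sum_univ_four, smul_eq_mul] at hij ⊢
  push_cast
  split <;> [skip; skip] <;> simp_all <;> exact_mod_cast hij

private lemma trC (σ : Matrix (Fin 4) (Fin 4) ℝ) (t : ℝ) (hR : (σ*σ).trace = t) :
    ((σ.map Complex.ofReal)*(σ.map Complex.ofReal)).trace = (t:ℂ) := by
  rw [← hR]
  simp only [Matrix.trace, Matrix.diag, Matrix.mul_apply, Matrix.map_apply, Fin.sum_univ_four]
  push_cast
  ring

private lemma VTlem (S : Matrix (Fin 4) (Fin 4) ℂ) (s : ℂ) (hST : Sᵀ = -S) :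
    ((s+1) • S - S*(S*S))ᵀ = -((s+1) • S - S*(S*S)) := by
  rw [Matrix.transpose_sub, Matrix.transpose_smul, Matrix.transpose_mul, Matrix.transpose_mul,
    hST]
  have e : ((-S)*(-S))*(-S) = -(S*(S*S)) := by noncomm_ring
  rw [e, smul_neg]
  abel

private lemma VHlem (S : Matrix (Fin 4) (Fin 4) ℂ) (s : ℂ) (hSH : Sᴴ = S)
    (hst : star (s+1) = s+1) :
    ((s+1) • S - S*(S*S))ᴴ = (s+1) • S - S*(S*S) := by
  rw [Matrix.conjTranspose_sub, Matrix.conjTranspose_smul, Matrix.conjTranspose_mul,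
    Matrix.conjTranspose_mul, hSH, hst]
  have e : (S*S)*S = S*(S*S) := mul_assoc _ _ _
  rw [e]

private lemma VVlem (S : Matrix (Fin 4) (Fin 4) ℂ) (s : ℂ)
    (h4 : (S*S)*(S*S) = s • (S*S) - 1) :
    ((s+1) • S - S*(S*S)) * ((s+1) • S - S*(S*S)) = (s+2) • 1 := by
  have e1 : S * (S * (S*S)) = (S*S)*(S*S) := by noncomm_ring
  have e2 : (S * (S*S)) * S = (S*S)*(S*S) := by noncomm_ring
  have e3 : (S * (S*S)) * (S * (S*S)) = (S*S) * ((S*S)*(S*S)) := by noncomm_ring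
  rw [sub_mul, mul_sub, mul_sub, Matrix.smul_mul, Matrix.mul_smul, smul_smul,
    Matrix.smul_mul, e1, Matrix.mul_smul, e2, e3, h4, mul_sub, Matrix.mul_smul, h4, mul_one]
  module

private lemma trSVlem (S : Matrix (Fin 4) (Fin 4) ℂ) (s : ℂ)
    (h4 : (S*S)*(S*S) = s • (S*S) - 1) (htr : (S*S).trace = 2*s) :
    (S * ((s+1) • S - S*(S*S))).trace = 2*s + 4 := by
  have e1 : S * (S * (S*S)) = (S*S)*(S*S) := by noncomm_ring
  rw [mul_sub, Matrix.mul_smul, e1, h4, Matrix.trace_sub, Matrix.trace_smul, Matrix.trace_sub,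
    Matrix.trace_smul, htr, Matrix.trace_one]
  simp [smul_eq_mul]
  ring

private lemma WWlem (V : Matrix (Fin 4) (Fin 4) ℂ) (c s : ℂ) (hc : c^2 = s + 2)
    (hVV : V*V = (s+2) • 1) :
    (c • 1 - V) * (c • 1 - V) = (2*c) • (c • 1 - V) := by
  rw [sub_mul, mul_sub, mul_sub]
  simp only [Matrix.smul_mul, Matrix.mul_smul, Matrix.one_mul, Matrix.mul_one, smul_smul]
  rw [hVV, show ((s:ℂ)+2) = c*c from by linear_combination -hc]
  module


set_option maxHeartbeats 4000000 in
/-- For [q^μ, q^ν] = iσ^{μν} with σ ∈ Σ (i.e. e⃗·m⃗ = ±1 and ‖e⃗‖ = ‖m⃗‖), every unit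
state with vanishing expectations obeys ∑_μ Δ(q^μ)² ≥ √(2 + ‖e⃗‖² + ‖m⃗‖²) ≥ 2. -/
theorem stmt6 {H : Type*} [NormedAddCommGroup H] [InnerProductSpace ℂ H]
    (σ : Matrix (Fin 4) (Fin 4) ℝ) (hanti : σᵀ = -σ)
    (hdot : (∑ j, elecPart σ j * magnPart σ j) = 1 ∨ (∑ j, elecPart σ j * magnPart σ j) = -1)
    (hnorm : Real.sqrt (∑ j, elecPart σ j ^ 2) = Real.sqrt (∑ j, magnPart σ j ^ 2))
    (q : Fin 4 → H →ₗ[ℂ] H)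
    (hsym : ∀ (μ : Fin 4) (x y : H), ⟪q μ x, y⟫_ℂ = ⟪x, q μ y⟫_ℂ)
    (hccr : ∀ (μ ν : Fin 4) (x : H), q μ (q ν x) - q ν (q μ x) = (σ μ ν : ℂ) • Complex.I • x)
    (ψ : H) (hψ : ‖ψ‖ = 1) (hexp : ∀ μ, ⟪ψ, q μ ψ⟫_ℂ = 0) :
    Real.sqrt (2 + (∑ j, elecPart σ j ^ 2) + (∑ j, magnPart σ j ^ 2)) ≤
        ∑ μ, uncertainty (q μ) ψ ^ 2 ∧
      2 ≤ ∑ μ, uncertainty (q μ) ψ ^ 2 := by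
  classical
  have h : ∀ i j : Fin 4, σ j i = -σ i j := by
    intro i j
    have := congrFun (congrFun hanti i) j
    simpa [Matrix.transpose_apply] using this
  have hd : ∀ i, σ i i = 0 := by intro i; have := h i i; linarith
  set a := σ 0 1 with ha
  set b := σ 0 2 with hb
  set c := σ 0 3 with hc
  set d := σ 1 2 with hdd
  set f := σ 1 3 with hf
  set g := σ 2 3 with hg
  have hσ : σ = !![0,a,b,c;-a,0,d,f;-b,-d,0,g;-c,-f,-g,0] := by
    ext i j
    fin_cases i <;> fin_cases j <;>
      simp [hd, h 0 1, h 0 2, h 0 3, h 1 2, h 1 3, h 2 3] <;> rfl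
  have hAe : (∑ j, elecPart σ j ^ 2) = a^2+b^2+c^2 := by
    simp [elecPart, Fin.sum_univ_three, show (Fin.succ 2:Fin 4)=3 from rfl] <;> rfl
  have hBe : (∑ j, magnPart σ j ^ 2) = g^2+f^2+d^2 := by
    simp [magnPart, Fin.sum_univ_three, h 1 3]
    try ring
  obtain ⟨s, hs_def⟩ : ∃ s : ℝ,
      s = (∑ j, elecPart σ j ^ 2) + (∑ j, magnPart σ j ^ 2) := ⟨_, rfl⟩
  have hs : s = a^2+b^2+c^2+d^2+f^2+g^2 := by rw [hs_def, hAe, hBe]; ring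
  have hpf : (a*g - b*f + c*d)^2 = 1 := by
    have hd3 : (∑ j, elecPart σ j * magnPart σ j) = a*g + b*(-f) + c*d := by
      simp [elecPart, magnPart, Fin.sum_univ_three, h 1 3,
        show (Fin.succ 2:Fin 4)=3 from rfl] <;> rfl
    rcases hdot with h1 | h1 <;> rw [hd3] at h1
    · have h2 : a*g - b*f + c*d = 1 := by linarith only [h1]
      rw [h2]; norm_num
    · have h2 : a*g - b*f + c*d = -1 := by linarith only [h1]
      rw [h2]; norm_num
  have hA0 : 0 ≤ ∑ j, elecPart σ j ^ 2 := by positivity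
  have hB0 : 0 ≤ ∑ j, magnPart σ j ^ 2 := by positivity
  have hAB : (∑ j, elecPart σ j ^ 2) = ∑ j, magnPart σ j ^ 2 :=
    (Real.sqrt_inj hA0 hB0).mp hnorm
  have h1em : (∑ j, elecPart σ j * magnPart σ j)^2 = 1 := by
    rcases hdot with h1 | h1 <;> rw [h1] <;> norm_num
  have hcs : (∑ j, elecPart σ j * magnPart σ j)^2 ≤
      (∑ j, elecPart σ j ^ 2) * (∑ j, magnPart σ j ^ 2) := by
    rw [Fin.sum_univ_three, Fin.sum_univ_three, Fin.sum_univ_three]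
    nlinarith [sq_nonneg (elecPart σ 0 * magnPart σ 1 - elecPart σ 1 * magnPart σ 0),
      sq_nonneg (elecPart σ 0 * magnPart σ 2 - elecPart σ 2 * magnPart σ 0),
      sq_nonneg (elecPart σ 1 * magnPart σ 2 - elecPart σ 2 * magnPart σ 1)]
  have hA1 : 1 ≤ ∑ j, elecPart σ j ^ 2 := by nlinarith [hcs, h1em, hA0, hAB]
  have h4le : (4:ℝ) ≤ 2 + (∑ j, elecPart σ j ^ 2) + (∑ j, magnPart σ j ^ 2) := by
    rw [← hAB]; linarith only [hA1]
  have hcharR : σ*σ*(σ*σ) + s • (σ*σ) + 1 = 0 := by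
    have hk := keyB a b c d f g
    rw [hpf, one_smul] at hk
    rw [hσ, keyA, hs]
    exact hk
  have htrR : (σ*σ).trace = -(2*s) := by
    rw [hσ, keyA, hs]
    simp [Matrix.trace, Fin.sum_univ_four, Matrix.diag]
    ring
  -- complexification
  obtain ⟨σc, hσc_def⟩ : ∃ X : Matrix (Fin 4) (Fin 4) ℂ,
      X = σ.map Complex.ofReal := ⟨_, rfl⟩
  have hσcapp : ∀ i j, σc i j = ((σ i j : ℝ) : ℂ) := by
    intro i j; rw [hσc_def]; rfl
  have hσcT : σcᵀ = -σc := by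
    ext i j
    simp only [Matrix.transpose_apply, Matrix.neg_apply, hσcapp, h i j]
    push_cast
    ring
  have hcharC := charC σ s hcharR
  rw [← hσc_def] at hcharC
  have htrC := trC σ (-(2*s)) htrR
  rw [← hσc_def] at htrC
  -- Gram matrix of the vectors q μ ψ
  obtain ⟨v, hv⟩ : ∃ v : Fin 4 → H, ∀ μ, v μ = q μ ψ := ⟨_, fun _ => rfl⟩
  obtain ⟨M, hMapp⟩ : ∃ M : Matrix (Fin 4) (Fin 4) ℂ,
      ∀ μ ν, M μ ν = ⟪v μ, v ν⟫_ℂ := ⟨Matrix.of _, fun _ _ => rfl⟩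
  have hinner : ∀ μ ν, ⟪v μ, v ν⟫_ℂ = ⟪ψ, q μ (q ν ψ)⟫_ℂ := by
    intro μ ν; rw [hv, hv]; exact hsym μ ψ (q ν ψ)
  have hψψ : ⟪ψ, ψ⟫_ℂ = 1 := by
    rw [inner_self_eq_norm_sq_to_K, hψ]; norm_num
  obtain ⟨S, hS⟩ : ∃ X : Matrix (Fin 4) (Fin 4) ℂ, X = Complex.I • σc := ⟨_, rfl⟩
  have hSapp : ∀ μ ν, S μ ν = Complex.I * ((σ μ ν : ℝ) : ℂ) := by
    intro μ ν; rw [hS]; simp [Matrix.smul_apply, hσcapp, smul_eq_mul]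
  have hskew : M - Mᵀ = S := by
    ext μ ν
    simp only [Matrix.sub_apply, Matrix.transpose_apply, hMapp, hSapp]
    rw [hinner, hinner, ← inner_sub_right, hccr μ ν ψ, inner_smul_right,
      inner_smul_right, hψψ]
    ring
  have hST : Sᵀ = -S := by rw [hS, Matrix.transpose_smul, hσcT, smul_neg]
  have hSH : Sᴴ = S := by
    have h1 : σcᴴ = σcᵀ := by
      ext i j
      simp [Matrix.conjTranspose_apply, Matrix.transpose_apply, hσcapp]
    rw [hS, Matrix.conjTranspose_smul, h1, hσcT]
    simp [Complex.star_def, Complex.conj_I]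
  have hSS : S*S = -(σc*σc) := by
    rw [hS, Matrix.smul_mul, Matrix.mul_smul, smul_smul, Complex.I_mul_I]
    simp
  have h4 : (S*S)*(S*S) = (s:ℂ) • (S*S) - 1 := by
    have h3 := hcharC
    rw [add_assoc, add_eq_zero_iff_eq_neg] at h3
    rw [hSS, neg_mul_neg, h3, smul_neg, neg_add]
    abel
  have htrSS : (S*S).trace = 2*(s:ℂ) := by
    rw [hSS, Matrix.trace_neg, htrC]
    push_cast
    ring
  obtain ⟨V, hV⟩ : ∃ X : Matrix (Fin 4) (Fin 4) ℂ,
      X = ((s:ℂ)+1) • S - S*(S*S) := ⟨_, rfl⟩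
  have hVT : Vᵀ = -V := by rw [hV]; exact VTlem S _ hST
  have hVH : Vᴴ = V := by rw [hV]; exact VHlem S _ hSH (by simp)
  have hVV : V*V = ((s:ℂ)+2) • 1 := by rw [hV]; exact VVlem S _ h4
  have htrSV : (S*V).trace = 2*(s:ℂ) + 4 := by rw [hV]; exact trSVlem S _ h4 htrSS
  -- the constant
  set cR := Real.sqrt (2 + (∑ j, elecPart σ j ^ 2) + (∑ j, magnPart σ j ^ 2)) with hcR
  have hsnn : 0 ≤ s := by rw [hs]; positivity
  have hcR_eq : cR = Real.sqrt (s + 2) := by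
    rw [hcR, hs_def]; ring_nf
  have hc2 : cR^2 = s + 2 := by rw [hcR_eq]; exact Real.sq_sqrt (by linarith)
  have hcpos : 0 < cR := by rw [hcR_eq]; exact Real.sqrt_pos.mpr (by linarith)
  have hc2C : ((cR:ℂ))^2 = (s:ℂ)+2 := by exact_mod_cast hc2
  obtain ⟨W, hW⟩ : ∃ X : Matrix (Fin 4) (Fin 4) ℂ,
      X = (cR:ℂ) • (1 : Matrix (Fin 4) (Fin 4) ℂ) - V := ⟨_, rfl⟩
  have hWH : Wᴴ = W := by
    rw [hW, Matrix.conjTranspose_sub, Matrix.conjTranspose_smul, hVH,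
      Matrix.conjTranspose_one]
    congr 2
    simp [Complex.star_def]
  have hWW : W * W = (2*(cR:ℂ)) • W := by rw [hW]; exact WWlem V _ _ hc2C hVV
  -- trace identities
  have htrMtV : (Mᵀ*V).trace = -((M*V).trace) := by
    calc (Mᵀ*V).trace = ((Mᵀ*V)ᵀ).trace := (Matrix.trace_transpose _).symm
      _ = (Vᵀ*M).trace := by rw [Matrix.transpose_mul, Matrix.transpose_transpose]
      _ = (M*Vᵀ).trace := Matrix.trace_mul_comm _ _
      _ = -((M*V).trace) := by rw [hVT, Matrix.mul_neg, Matrix.trace_neg]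
  have htrMV : (M*V).trace = (s:ℂ)+2 := by
    have h2 : ((M - Mᵀ)*V).trace = (M*V).trace - (Mᵀ*V).trace := by
      rw [Matrix.sub_mul, Matrix.trace_sub]
    rw [hskew, htrSV, htrMtV] at h2
    linear_combination -h2 / 2
  -- positivity
  have hreInner : ∀ u : H, (⟪u, u⟫_ℂ).re = ‖u‖^2 := by
    intro u
    have := inner_self_eq_norm_sq (𝕜 := ℂ) u
    simpa [RCLike.re_to_complex] using this
  have hpos : ∀ X : Matrix (Fin 4) (Fin 4) ℂ, 0 ≤ ((X*M*Xᴴ).trace).re := by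
    intro X
    rw [Matrix.trace, Complex.re_sum]
    apply Finset.sum_nonneg
    intro k _
    have hk : (X*M*Xᴴ) k k = ⟪∑ μ, (starRingEnd ℂ) (X k μ) • v μ,
        ∑ ν, (starRingEnd ℂ) (X k ν) • v ν⟫_ℂ := by
      rw [inner_sum]
      simp only [sum_inner, inner_smul_left, inner_smul_right, RingHomCompTriple.comp_apply,
        RingHom.id_apply, starRingEnd_self_apply]
      simp only [Matrix.mul_apply, Matrix.conjTranspose_apply]
      refine Finset.sum_congr rfl fun ν _ => ?_
      rw [Finset.sum_mul, Finset.mul_sum]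
      refine Finset.sum_congr rfl fun μ _ => ?_
      simp only [hMapp, Complex.star_def]
      ring
    simp only [Matrix.diag] at hk ⊢
    rw [hk, hreInner]
    positivity
  have hMW : (M*W).trace = (cR:ℂ) * M.trace - ((s:ℂ)+2) := by
    rw [hW, mul_sub, Matrix.mul_smul, Matrix.mul_one, Matrix.trace_sub, Matrix.trace_smul,
      htrMV, smul_eq_mul]
  have h2c : (2*(cR:ℂ)) * (M*W).trace = ((W*M*Wᴴ).trace) := by
    rw [hWH]
    calc (2*(cR:ℂ)) * (M*W).trace = ((2*(cR:ℂ)) • (M*W)).trace := by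
          rw [Matrix.trace_smul, smul_eq_mul]
      _ = (M*(W*W)).trace := by rw [hWW, Matrix.mul_smul]
      _ = ((M*W)*W).trace := by rw [mul_assoc]
      _ = (W*(M*W)).trace := Matrix.trace_mul_comm _ _
      _ = (W*M*W).trace := by rw [mul_assoc]
  have h6 : 0 ≤ (2*cR) * ((M*W).trace).re := by
    have hp := hpos W
    rw [← h2c] at hp
    have hcast : (2*(cR:ℂ)) = ((2*cR:ℝ):ℂ) := by push_cast; ring
    rw [hcast] at hp
    simpa [Complex.re_ofReal_mul] using hp
  have h7 : 0 ≤ ((M*W).trace).re := by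
    exact le_of_mul_le_mul_left (by rw [mul_zero]; exact h6) (by linarith : (0:ℝ) < 2*cR)
  have h8 : s + 2 ≤ cR * (M.trace).re := by
    have hre : (((cR:ℂ) * M.trace - ((s:ℂ)+2)).re) = cR * (M.trace).re - (s+2) := by
      rw [Complex.sub_re, Complex.re_ofReal_mul, Complex.add_re, Complex.ofReal_re]
      norm_num
    rw [hMW, hre] at h7
    linarith
  have hTre : (M.trace).re = ∑ μ, uncertainty (q μ) ψ ^ 2 := by
    rw [Matrix.trace, Complex.re_sum]
    refine Finset.sum_congr rfl fun μ _ => ?_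
    simp only [Matrix.diag, hMapp]
    rw [uncertainty, hexp μ]
    simp only [Complex.zero_re]
    rw [← hinner μ μ, Real.sq_sqrt]
    · ring_nf
    · rw [hreInner]
      ring_nf
      positivity
  rw [← hTre]
  have hcc : cR * cR = s + 2 := by rw [← hc2]; ring
  have main1 : cR ≤ (M.trace).re :=
    le_of_mul_le_mul_left (by rw [hcc]; exact h8) hcpos
  refine ⟨main1, ?_⟩
  have h2cR : (2:ℝ) ≤ cR := by
    rw [hcR]
    calc (2:ℝ) = Real.sqrt 4 := by
          rw [show (4:ℝ) = 2^2 by norm_num, Real.sqrt_sq (by norm_num : (0:ℝ) ≤ 2)]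
      _ ≤ _ := Real.sqrt_le_sqrt h4le
  linarith only [main1, h2cR]
end
end
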